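/- arXiv:2605.03581 — 3 statements merged into one kernel-verified Lean document; each statement's English description precedes it below -/
import Mathlib

section
/- Let i ∈ B. Then the Shapley value of i in the n-player game on N equals its Shapley value in the M-player subgame on B: ∑_{S ⊆ N \ {i}} (|S|!(n−|S|−1)!/n!)(u(S ∪ {i}) − u(S)) = ∑_{T ⊆ B \ {i}} (|T|!(M−|T|−1)!/M!)(u(T ∪ {i}) − u(T)). -/
open Finset

lemma key (b : ℕ) : ∀ (n a : ℕ),
    ∑ k ∈ range (n+1), (k.choose a) * ((n-k).choose b) = (n+1).choose (a+b+1) := by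
  intro n
  induction n with
  | zero =>
    intro a
    cases a <;> cases b <;> simp [Nat.choose]
  | succ n ih =>
    intro a
    cases a with
    | zero =>
      simp only [Nat.choose_zero_right, one_mul, Nat.zero_add]
      have hr : ∑ x ∈ range (n+1+1), (n+1-x).choose b = ∑ x ∈ range (n+1+1), x.choose b := by
        rw [← Finset.sum_range_reflect]
        apply Finset.sum_congr rfl
        intro x hx
        simp only [mem_range] at hx
        congr 1
        omega
      rw [hr]
      have h1 : range (n+2) = Icc 0 (n+1) := by
        rw [range_eq_Ico]; exact Finset.Ico_add_one_right_eq_Icc 0 (n+1)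
      rw [h1, ← Nat.sum_Icc_choose]
      symm
      apply Finset.sum_subset
      · intro x hx; simp only [mem_Icc] at hx ⊢; omega
      · intro x hx hx'
        simp only [mem_Icc] at hx hx'
        exact Nat.choose_eq_zero_of_lt (by omega)
    | succ a =>
      rw [Finset.sum_range_succ']
      have hterm : ∀ i, (i+1).choose (a+1) * ((n+1-(i+1)).choose b)
          = i.choose a * ((n-i).choose b) + i.choose (a+1) * ((n-i).choose b) := by
        intro i
        rw [Nat.choose_succ_succ, Nat.add_mul, Nat.succ_sub_succ]
      simp only [hterm, Finset.sum_add_distrib, ih, Nat.choose_zero_succ, Nat.zero_mul,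
        Nat.add_zero]

      rw [show a+1+b+1 = (a+b+1)+1 by omega]
      exact (Nat.choose_succ_succ' (n+1) (a+b+1)).symm ▸ rfl

lemma key2 (t s K : ℕ) :
    ∑ r ∈ range (K+1), (t+r).choose t * ((s+(K-r)).choose s)
      = (t+s+K+1).choose (t+s+1) := by
  have hk := key s (t+s+K) t
  rw [← hk]
  have h1 : ∑ r ∈ range (K+1), (t+r).choose t * ((s+(K-r)).choose s)
      = ∑ k ∈ Ico t (t+K+1), k.choose t * ((t+s+K-k).choose s) := by
    rw [Finset.sum_Ico_eq_sum_range, show t + K + 1 - t = K + 1 from by omega]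
    apply Finset.sum_congr rfl
    intro r hr
    simp only [mem_range] at hr
    congr 2
    omega
  rw [h1]
  apply Finset.sum_subset
  · intro x hx
    simp only [mem_Ico] at hx
    simp only [mem_range]
    omega
  · intro x hx hx'
    simp only [mem_range] at hx
    simp only [mem_Ico, not_and, not_lt] at hx'
    rcases lt_or_ge x t with h | h
    · rw [Nat.choose_eq_zero_of_lt h, Nat.zero_mul]
    · rw [Nat.choose_eq_zero_of_lt (show t+s+K-x < s by omega), Nat.mul_zero]

lemma term_eq (t s K r : ℕ) (hr : r ≤ K) :
    K.choose r * ((t+r).factorial * (s+(K-r)).factorial)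
      = K.factorial * t.factorial * s.factorial
          * ((t+r).choose t * ((s+(K-r)).choose s)) := by
  obtain ⟨q, hq⟩ : ∃ q, K = r + q := ⟨K - r, by omega⟩
  subst hq
  rw [show r + q - r = q from by omega]
  have h1 := Nat.choose_mul_factorial_mul_factorial (Nat.le_add_right t r)
  rw [show t + r - t = r from by omega] at h1
  have h2 := Nat.choose_mul_factorial_mul_factorial (Nat.le_add_right s q)
  rw [show s + q - s = q from by omega] at h2
  have h3 := Nat.choose_mul_factorial_mul_factorial (Nat.le_add_right r q)
  rw [show r + q - r = q from by omega] at h3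
  rw [← h1, ← h2, ← h3]
  ring

lemma weight_sum (t s K : ℕ) :
    ∑ r ∈ range (K+1),
        (K.choose r : ℝ) * (((t+r).factorial : ℝ) * ((s+(K-r)).factorial : ℝ)
          / ((t+s+K+1).factorial : ℝ))
      = ((t.factorial : ℝ) * (s.factorial : ℝ)) / ((t+s+1).factorial : ℝ) := by
  have hnat : ∑ r ∈ range (K+1), K.choose r * ((t+r).factorial * (s+(K-r)).factorial)
      = K.factorial * t.factorial * s.factorial * (t+s+K+1).choose (t+s+1) := by
    calc ∑ r ∈ range (K+1), K.choose r * ((t+r).factorial * (s+(K-r)).factorial)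
        = ∑ r ∈ range (K+1), K.factorial * t.factorial * s.factorial
            * ((t+r).choose t * ((s+(K-r)).choose s)) := by
          apply Finset.sum_congr rfl
          intro r hr
          exact term_eq t s K r (by simp only [mem_range] at hr; omega)
      _ = K.factorial * t.factorial * s.factorial
            * ∑ r ∈ range (K+1), (t+r).choose t * ((s+(K-r)).choose s) := by
          rw [Finset.mul_sum]
      _ = _ := by rw [key2]
  have hM : (t+s+K+1).choose (t+s+1) * (t+s+1).factorial * K.factorial
      = (t+s+K+1).factorial := by
    have h := Nat.choose_mul_factorial_mul_factorial (show t+s+1 ≤ t+s+K+1 by omega)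
    rw [show t+s+K+1-(t+s+1) = K from by omega] at h
    exact h
  have hMr : ((t+s+K+1).factorial : ℝ)
      = ((t+s+K+1).choose (t+s+1) : ℝ) * ((t+s+1).factorial : ℝ) * (K.factorial : ℝ) := by
    exact_mod_cast hM.symm
  have hne : ((t+s+K+1).factorial : ℝ) ≠ 0 := by positivity
  have hne2 : ((t+s+1).factorial : ℝ) ≠ 0 := by positivity
  have hCne : ((t+s+K+1).choose (t+s+1) : ℝ) ≠ 0 := by
    have : 0 < (t+s+K+1).choose (t+s+1) := Nat.choose_pos (by omega)
    positivity
  calc ∑ r ∈ range (K+1),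
        (K.choose r : ℝ) * (((t+r).factorial : ℝ) * ((s+(K-r)).factorial : ℝ)
          / ((t+s+K+1).factorial : ℝ))
      = ((∑ r ∈ range (K+1), K.choose r * ((t+r).factorial * (s+(K-r)).factorial) : ℕ) : ℝ)
          / ((t+s+K+1).factorial : ℝ) := by
        rw [Nat.cast_sum, Finset.sum_div]
        apply Finset.sum_congr rfl
        intro r _
        push_cast
        ring
    _ = ((K.factorial * t.factorial * s.factorial * (t+s+K+1).choose (t+s+1) : ℕ) : ℝ)
          / ((t+s+K+1).factorial : ℝ) := by rw [hnat]
    _ = ((t.factorial : ℝ) * (s.factorial : ℝ)) / ((t+s+1).factorial : ℝ) := by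
        push_cast
        rw [hMr]
        have hKne : (K.factorial : ℝ) ≠ 0 := by positivity
        field_simp
open Finset

/-- Bucket-vote utility: `u(S) = |S ∩ B⁺| / |S ∩ B|` if `S ∩ B ≠ ∅`, else `0`. -/
noncomputable def u {α : Type*} [DecidableEq α] (B Bp : Finset α) (S : Finset α) : ℝ :=
  if (S ∩ B).Nonempty then ((S ∩ Bp).card : ℝ) / ((S ∩ B).card : ℝ) else 0

/-- Shapley value of player `i` in the game on `N` with utility `u B Bp`. -/
noncomputable def shapley {α : Type*} [DecidableEq α] (N B Bp : Finset α) (i : α) : ℝ :=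
  ∑ S ∈ (N.erase i).powerset,
    ((S.card.factorial * (N.card - S.card - 1).factorial : ℝ) / (N.card.factorial : ℝ))
      * (u B Bp (insert i S) - u B Bp S)

lemma u_congr {α : Type*} [DecidableEq α] {B Bp S T : Finset α}
    (hBp : Bp ⊆ B) (hT : T ⊆ B) (h : S ∩ B = T) : u B Bp S = u B Bp T := by
  have h1 : T ∩ B = T := inter_eq_left.mpr hT
  have h2 : S ∩ Bp = T ∩ Bp := by
    conv_lhs => rw [← inter_eq_right.mpr hBp, ← inter_assoc, h]
  unfold u
  rw [h, h1, h2]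

/-- The Shapley value of a bucket member `i ∈ B` in the `n`-player game on `N`
equals its Shapley value in the `M`-player subgame on `B`. -/
theorem stmt1 {α : Type*} [DecidableEq α] (N B Bp : Finset α)
    (hBpB : Bp ⊆ B) (hBN : B ⊆ N) (hBne : B.Nonempty)
    (i : α) (hi : i ∈ B) :
    shapley N B Bp i =
      ∑ T ∈ (B.erase i).powerset,
        ((T.card.factorial * (B.card - T.card - 1).factorial : ℝ) / (B.card.factorial : ℝ))
          * (u B Bp (insert i T) - u B Bp T) := by
  classical
  unfold shapley
  -- group the sum by `T = S ∩ B`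
  have hmap : ∀ S ∈ (N.erase i).powerset, S ∩ B ∈ (B.erase i).powerset := by
    intro S hS
    rw [mem_powerset] at hS ⊢
    intro x hx
    rw [mem_inter] at hx
    rw [mem_erase]
    exact ⟨fun hxi => (mem_erase.mp (hS hx.1)).1 (hxi ▸ rfl), hx.2⟩
  rw [← Finset.sum_fiberwise_of_maps_to hmap]
  apply Finset.sum_congr rfl
  intro T hT
  rw [mem_powerset] at hT
  have hTB : T ⊆ B := hT.trans (erase_subset _ _)
  have hiT : i ∉ T := fun h => (mem_erase.mp (hT h)).1 rfl
  -- the marginal contribution is constant on each fiber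
  have hconst : ∀ S ∈ (N.erase i).powerset.filter (fun S => S ∩ B = T),
      u B Bp (insert i S) - u B Bp S = u B Bp (insert i T) - u B Bp T := by
    intro S hS
    rw [mem_filter] at hS
    have hSB : S ∩ B = T := hS.2
    have h1 : u B Bp S = u B Bp T := u_congr hBpB hTB hSB
    have h2 : insert i S ∩ B = insert i T := by
      rw [insert_inter_of_mem hi, hSB]
    have h3 : u B Bp (insert i S) = u B Bp (insert i T) :=
      u_congr hBpB (insert_subset hi hTB) h2
    rw [h1, h3]
  rw [Finset.sum_congr rfl (fun S hS => by rw [hconst S hS])]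
  rw [← Finset.sum_mul]
  congr 1
  -- now compute the sum of the weights over the fiber
  set K := (N \ B).card with hK
  set t := T.card with ht
  have hM1 : 1 ≤ B.card := card_pos.mpr hBne
  have htM : t ≤ B.card - 1 := by
    have := card_le_card hT
    rw [card_erase_of_mem hi] at this
    omega
  obtain ⟨s, hs⟩ : ∃ s, B.card = t + s + 1 := ⟨B.card - t - 1, by omega⟩
  have hNc : N.card = t + s + K + 1 := by
    have h1 : K = N.card - B.card := by rw [hK, card_sdiff_of_subset hBN]
    have h2 : B.card ≤ N.card := card_le_card hBN
    omega
  -- bijection between the fiber and the powerset of `N \ B`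
  have hbij : ∑ S ∈ (N.erase i).powerset.filter (fun S => S ∩ B = T),
      ((S.card.factorial * (N.card - S.card - 1).factorial : ℝ) / (N.card.factorial : ℝ))
      = ∑ R ∈ (N \ B).powerset,
      (((t + R.card).factorial * (N.card - (t + R.card) - 1).factorial : ℝ)
        / (N.card.factorial : ℝ)) := by
    apply Finset.sum_bij' (i := fun S _ => S \ B) (j := fun R _ => T ∪ R)
    · intro S hS
      rw [mem_filter, mem_powerset] at hS
      rw [mem_powerset]
      exact sdiff_subset_sdiff (hS.1.trans (erase_subset _ _)) (le_refl B)
    · intro R hR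
      rw [mem_powerset] at hR
      rw [mem_filter, mem_powerset]
      have hRN : R ⊆ N.erase i := by
        intro x hx
        have hx' := hR hx
        rw [mem_sdiff] at hx'
        rw [mem_erase]
        exact ⟨fun h => hx'.2 (h ▸ hi), hx'.1⟩
      have hTN : T ⊆ N.erase i := by
        intro x hx
        have hx' := hT hx
        rw [mem_erase] at hx' ⊢
        exact ⟨hx'.1, hBN hx'.2⟩
      constructor
      · exact union_subset hTN hRN
      · rw [union_inter_distrib_right, inter_eq_left.mpr hTB]
        have : R ∩ B = ∅ := by
          rw [← disjoint_iff_inter_eq_empty]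
          exact disjoint_of_subset_left hR sdiff_disjoint
        rw [this, union_empty]
    · intro S hS
      rw [mem_filter] at hS
      rw [← hS.2, union_comm]
      exact sdiff_union_inter S B
    · intro R hR
      rw [mem_powerset] at hR
      rw [union_sdiff_distrib, sdiff_eq_empty_iff_subset.mpr hTB, empty_union,
        sdiff_eq_self_of_disjoint (disjoint_of_subset_left hR sdiff_disjoint)]
    · intro S hS
      rw [mem_filter] at hS
      have hcard : S.card = t + (S \ B).card := by
        rw [ht, ← hS.2]
        rw [← card_inter_add_card_sdiff S B]
      rw [← hcard]
  rw [hbij]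
  -- group by cardinality
  rw [Finset.sum_powerset_apply_card
    (f := fun m => (((t + m).factorial * (N.card - (t + m) - 1).factorial : ℝ)
      / (N.card.factorial : ℝ)))]
  rw [← hK]
  -- reduce to the arithmetic identity
  have := weight_sum t s K
  calc ∑ m ∈ range (K + 1), (K.choose m) •
        (((t + m).factorial * (N.card - (t + m) - 1).factorial : ℝ) / (N.card.factorial : ℝ))
      = ∑ m ∈ range (K + 1), (K.choose m : ℝ) *
        (((t + m).factorial : ℝ) * ((s + (K - m)).factorial : ℝ)
          / ((t + s + K + 1).factorial : ℝ)) := by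
        apply Finset.sum_congr rfl
        intro m hm
        rw [mem_range] at hm
        rw [nsmul_eq_mul, show N.card - (t + m) - 1 = s + (K - m) from by omega, hNc]
    _ = ((t.factorial : ℝ) * (s.factorial : ℝ)) / ((t + s + 1).factorial : ℝ) := weight_sum t s K
    _ = ((T.card.factorial * (B.card - T.card - 1).factorial : ℝ) / (B.card.factorial : ℝ)) := by
        rw [show B.card - T.card - 1 = s from by omega, hs, ← ht]
end

section
/- Suppose M ≥ 2 and i ∈ B⁺. Then the Shapley value of i under u admits the closed form φ_i = H_M/M − (M⁺ − 1)(H_M − 1)/(M(M − 1)). -/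
open Finset

/-- The `m`-th harmonic number `H m = ∑_{j=1}^m 1/j` (with `H 0 = 0`). -/
noncomputable def H (m : ℕ) : ℝ := ∑ j ∈ Finset.range m, (1 : ℝ) / (j + 1)


noncomputable def W (a b : ℕ) : ℝ :=
  (a.factorial * b.factorial : ℝ) / ((a + b + 1).factorial : ℝ)

lemma W_rec (a b : ℕ) : W a (b + 1) + W (a + 1) b = W a b := by
  unfold W
  have h1 : (a + (b+1) + 1) = a + b + 2 := by ring
  have h2 : (a + 1 + b + 1) = a + b + 2 := by ring
  rw [h1, h2]
  have hf : ((a+b+2).factorial : ℝ) = ((a+b+2 : ℕ) : ℝ) * ((a+b+1).factorial : ℝ) := by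
    rw [show a+b+2 = (a+b+1)+1 from rfl, Nat.factorial_succ]; push_cast; ring
  have hb : ((b+1).factorial : ℝ) = ((b+1 : ℕ) : ℝ) * (b.factorial : ℝ) := by
    rw [Nat.factorial_succ]; push_cast; ring
  have ha : ((a+1).factorial : ℝ) = ((a+1 : ℕ) : ℝ) * (a.factorial : ℝ) := by
    rw [Nat.factorial_succ]; push_cast; ring
  have hne : ((a+b+1).factorial : ℝ) ≠ 0 := by positivity
  have hne2 : ((a+b+2 : ℕ) : ℝ) ≠ 0 := by positivity
  rw [hf, hb, ha]
  field_simp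
  push_cast
  ring

lemma marginal {α : Type*} [DecidableEq α] (t c : ℕ) (R₀ : Finset α) :
    ∑ R ∈ R₀.powerset, W (t + R.card) (c + (R₀ \ R).card) = W t c := by
  induction R₀ using Finset.induction_on with
  | empty => simp
  | insert _ _ hx ih =>
    rename_i x s
    rw [Finset.sum_powerset_insert hx]
    have h1 : ∀ R ∈ s.powerset, W (t + R.card) (c + ((insert x s) \ R).card)
        = W (t + R.card) ((c + (s \ R).card) + 1) := by
      intro R hR
      rw [mem_powerset] at hR
      have : (insert x s) \ R = insert x (s \ R) := by
        rw [insert_sdiff_of_notMem]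
        exact fun hxR => hx (hR hxR)
      rw [this, card_insert_of_notMem (fun h => hx (mem_sdiff.1 h).1)]
      ring_nf
    have h2 : ∀ R ∈ s.powerset, W (t + (insert x R).card) (c + ((insert x s) \ (insert x R)).card)
        = W ((t + R.card) + 1) (c + (s \ R).card) := by
      intro R hR
      rw [mem_powerset] at hR
      have hxR : x ∉ R := fun h => hx (hR h)
      have : (insert x s) \ (insert x R) = s \ R := by
        ext y
        simp only [mem_sdiff, mem_insert, not_or]
        constructor
        · rintro ⟨hy1 | hy1, hy2, hy3⟩
          · exact absurd hy1 hy2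
          · exact ⟨hy1, hy3⟩
        · rintro ⟨hy1, hy2⟩
          exact ⟨Or.inr hy1, fun h => hx (h ▸ hy1), hy2⟩
      rw [this, card_insert_of_notMem hxR, Nat.add_assoc]
    rw [Finset.sum_congr rfl h1, Finset.sum_congr rfl h2, ← Finset.sum_add_distrib]
    rw [← ih]
    exact Finset.sum_congr rfl fun R _ => W_rec _ _

lemma powerset_union_sum {α : Type*} [DecidableEq α] {s t : Finset α} (h : Disjoint s t)
    (f : Finset α → ℝ) :
    ∑ u ∈ (s ∪ t).powerset, f u = ∑ v ∈ s.powerset, ∑ w ∈ t.powerset, f (v ∪ w) := by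
  induction s using Finset.induction_on generalizing f with
  | empty => simp
  | insert _ _ hx ih =>
    rename_i x s
    have hdisj : Disjoint s t := (disjoint_insert_left.1 h).2
    have hxt : x ∉ t := (disjoint_insert_left.1 h).1
    have hxst : x ∉ s ∪ t := by simp [hx, hxt]
    rw [insert_union, Finset.sum_powerset_insert hxst, Finset.sum_powerset_insert hx, ih hdisj f]
    congr 1
    rw [ih hdisj (fun u => f (insert x u))]
    refine Finset.sum_congr rfl fun v hv => Finset.sum_congr rfl fun w hw => ?_
    rw [insert_union]


lemma vand (p' q' b : ℕ) :
    ∑ p ∈ range (b+1), p'.choose p * q'.choose (b-p) = (p'+q').choose b := by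
  rw [Nat.add_choose_eq, Finset.Nat.sum_antidiagonal_eq_sum_range_succ_mk]

lemma vand1 (p' q' b : ℕ) :
    ∑ p ∈ range (b+2), p * (p'.choose p * q'.choose (b+1-p))
      = p' * ((p'+q'-1).choose b) := by
  cases p' with
  | zero =>
    simp only [Nat.zero_mul]
    refine Finset.sum_eq_zero fun p _ => ?_
    cases p with
    | zero => simp
    | succ p => simp [Nat.choose_zero_succ]
  | succ p'' =>
    rw [Finset.sum_range_succ']
    simp only [Nat.zero_mul, add_zero]
    have hterm : ∀ p ∈ range (b+1), (p+1) * ((p''+1).choose (p+1) * q'.choose (b+1-(p+1)))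
        = (p''+1) * (p''.choose p * q'.choose (b-p)) := by
      intro p _
      have h1 : b+1-(p+1) = b-p := by omega
      have h2 : (p+1) * ((p''+1).choose (p+1)) = (p''+1) * p''.choose p := by
        simpa [Nat.succ_eq_add_one, Nat.mul_comm] using (Nat.add_one_mul_choose_eq p'' p).symm
      rw [h1, ← Nat.mul_assoc, h2, Nat.mul_assoc]
    rw [Finset.sum_congr rfl hterm, ← Finset.mul_sum, vand]
    have : p''+1+q'-1 = p''+q' := by omega
    rw [this]

lemma W_choose {n b : ℕ} (h : b ≤ n) : W b (n-b) * (n.choose b : ℝ) = 1/((n:ℝ)+1) := by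
  unfold W
  have h1 : b + (n-b) + 1 = n+1 := by omega
  rw [h1]
  have key := Nat.choose_mul_factorial_mul_factorial h
  have keyR : (n.choose b : ℝ) * (b.factorial : ℝ) * ((n-b).factorial : ℝ) = (n.factorial : ℝ) := by
    exact_mod_cast congrArg (Nat.cast : ℕ → ℝ) key
  rw [Nat.factorial_succ]
  have hnf : (n.factorial : ℝ) ≠ 0 := by positivity
  have hn1 : ((n:ℝ)+1) ≠ 0 := by positivity
  push_cast
  field_simp
  nlinarith [keyR]

lemma W_choose1 {n b : ℕ} (hb : 1 ≤ b) (h : b ≤ n) :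
    W b (n-b) * ((n-1).choose (b-1) : ℝ) = (b:ℝ)/(((n:ℝ)+1)*(n:ℝ)) := by
  obtain ⟨b', rfl⟩ : ∃ b', b = b'+1 := ⟨b-1, by omega⟩
  obtain ⟨n', rfl⟩ : ∃ n', n = n'+1 := ⟨n-1, by omega⟩
  have hb'n' : b' ≤ n' := by omega
  unfold W
  have h1 : b'+1 + (n'+1-(b'+1)) + 1 = n'+2 := by omega
  have h2 : n'+1-(b'+1) = n'-b' := by omega
  have h3 : n'+1-1 = n' := by omega
  have h4 : b'+1-1 = b' := by omega
  rw [h2] at h1 ⊢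
  rw [h1, h3, h4]
  have key := Nat.choose_mul_factorial_mul_factorial hb'n'
  have keyR : (n'.choose b' : ℝ) * (b'.factorial : ℝ) * ((n'-b').factorial : ℝ)
      = (n'.factorial : ℝ) := by exact_mod_cast congrArg (Nat.cast : ℕ → ℝ) key
  have e1 : ((n'+2).factorial : ℝ) = ((n':ℝ)+2) * (((n':ℝ)+1) * (n'.factorial : ℝ)) := by
    rw [show n'+2 = (n'+1)+1 from rfl, Nat.factorial_succ, Nat.factorial_succ]; push_cast; ring
  have e2 : (((b'+1)).factorial : ℝ) = ((b':ℝ)+1) * (b'.factorial : ℝ) := by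
    rw [Nat.factorial_succ]; push_cast; ring
  rw [e1, e2]
  have hnf : (n'.factorial : ℝ) ≠ 0 := by positivity
  have hbf : (b'.factorial : ℝ) ≠ 0 := by positivity
  have hnbf : ((n'-b').factorial : ℝ) ≠ 0 := by positivity
  have h5 : ((n':ℝ)+2) ≠ 0 := by positivity
  have h6 : ((n':ℝ)+1) ≠ 0 := by positivity
  push_cast
  field_simp
  linear_combination ((n':ℝ)+2) * keyR

lemma W_zero (c : ℕ) : W 0 c = 1/((c:ℝ)+1) := by
  unfold W
  rw [Nat.zero_add, Nat.factorial_succ]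
  have : (c.factorial : ℝ) ≠ 0 := by positivity
  push_cast
  field_simp
  ring

/-- truncation bridge -/
lemma trunc (p' n' b : ℕ) (g : ℕ → ℝ) (hg : ∀ p, p' < p → g p = 0)
    (hb : b ≤ n') (hp : p' ≤ n') :
    ∑ p ∈ range (p'+1), (if p ≤ b then g p else 0) = ∑ p ∈ range (b+1), g p := by
  have step1 : ∑ p ∈ range (p'+1), (if p ≤ b then g p else 0)
      = ∑ p ∈ range (n'+1), (if p ≤ b then g p else 0) := by
    refine Finset.sum_subset (by simp [Finset.range_subset]; omega) ?_
    intro p hp1 hp2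
    simp only [mem_range] at hp1 hp2
    have : p' < p := by omega
    simp [hg p this]
  have step2 : ∑ p ∈ range (b+1), g p
      = ∑ p ∈ range (n'+1), (if p ≤ b then g p else 0) := by
    rw [Finset.sum_congr rfl (g := fun p => if p ≤ b then g p else 0) (fun p hp => by
      simp only [mem_range] at hp
      exact (if_pos (by omega : p ≤ b)).symm)]
    refine Finset.sum_subset (by simp [Finset.range_subset]; omega) ?_
    intro p hp1 hp2
    simp only [mem_range] at hp1 hp2
    rw [if_neg (by omega)]
  rw [step1, ← step2]

lemma key_s5 (p' q' : ℕ) (h1 : 1 ≤ p' + q') :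
    (∑ p ∈ range (p'+1), ∑ q ∈ range (q'+1),
      (p'.choose p : ℝ) * (q'.choose q : ℝ) * W (p+q) ((p'-p)+(q'-q)) *
        (((p:ℝ)+1)/((p:ℝ)+(q:ℝ)+1) - (p:ℝ)/((p:ℝ)+(q:ℝ))))
    = H (p'+q'+1) / ((p':ℝ)+(q':ℝ)+1)
      - (p' : ℝ) * (H (p'+q'+1) - 1) / ((((p':ℝ)+(q':ℝ)+1)) * ((p':ℝ)+(q':ℝ))) := by
  set n' := p' + q' with hn'
  -- the diagonal term
  set e : ℕ → ℕ → ℝ := fun p b =>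
    (p'.choose p : ℝ) * (q'.choose (b-p) : ℝ) * W b (n'-b) *
      (((p:ℝ)+1)/((b:ℝ)+1) - (p:ℝ)/(b:ℝ)) with he
  have step1 : ∀ p ∈ range (p'+1), ∀ q ∈ range (q'+1),
      (p'.choose p : ℝ) * (q'.choose q : ℝ) * W (p+q) ((p'-p)+(q'-q)) *
        (((p:ℝ)+1)/((p:ℝ)+(q:ℝ)+1) - (p:ℝ)/((p:ℝ)+(q:ℝ)))
      = ∑ b ∈ range (n'+1), (if b = p + q then e p b else 0) := by
    intro p hp q hq
    simp only [mem_range] at hp hq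
    rw [Finset.sum_ite_eq' (range (n'+1)) (p+q) (fun b => e p b)]
    rw [if_pos (by simp only [mem_range]; omega)]
    rw [he]
    have c1 : p + q - p = q := by omega
    have c2 : n' - (p+q) = (p'-p)+(q'-q) := by omega
    have c3 : ((p+q : ℕ) : ℝ) = (p:ℝ)+(q:ℝ) := by push_cast; ring
    simp only [c1, c2, c3]
  rw [Finset.sum_congr rfl (fun p hp => Finset.sum_congr rfl (fun q hq => step1 p hp q hq))]
  rw [Finset.sum_congr rfl (fun p _ => Finset.sum_comm), Finset.sum_comm]
  -- now LHS = ∑ b, ∑ p, ∑ q ite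
  have step2 : ∀ b ∈ range (n'+1), ∀ p ∈ range (p'+1),
      ∑ q ∈ range (q'+1), (if b = p + q then e p b else 0)
        = if p ≤ b then e p b else 0 := by
    intro b hb p hp
    simp only [mem_range] at hb hp
    by_cases hpb : p ≤ b
    · rw [Finset.sum_congr rfl (g := fun q => if q = b - p then e p b else 0)
        (fun q hq => by
          congr 1
          simp only [eq_iff_iff]
          omega)]
      rw [Finset.sum_ite_eq' (range (q'+1)) (b-p) (fun _ => e p b)]
      by_cases hbq : b - p ≤ q'
      · rw [if_pos (by simp only [mem_range]; omega), if_pos hpb]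
      · rw [if_neg (by simp only [mem_range]; omega), if_pos hpb]
        rw [he]
        simp [Nat.choose_eq_zero_of_lt (show q' < b - p by omega)]
    · rw [if_neg hpb]
      refine Finset.sum_eq_zero fun q hq => ?_
      rw [if_neg (by omega)]
  rw [Finset.sum_congr rfl (fun b hb => Finset.sum_congr rfl (fun p hp => step2 b hb p hp))]
  have step3 : ∀ b ∈ range (n'+1),
      ∑ p ∈ range (p'+1), (if p ≤ b then e p b else 0) = ∑ p ∈ range (b+1), e p b := by
    intro b hb
    simp only [mem_range] at hb
    refine trunc p' n' b (fun p => e p b) (fun p hpp => ?_) (by omega) (by omega)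
    rw [he]
    simp [Nat.choose_eq_zero_of_lt hpp]
  rw [Finset.sum_congr rfl step3, Finset.sum_range_succ']
  have b0 : ∑ p ∈ range (0+1), e p 0 = 1/((n':ℝ)+1) := by
    rw [Finset.sum_range_one, he]
    simp [W_zero n']
  have Eb' : ∀ b ∈ range n', ∑ p ∈ range ((b+1)+1), e p (b+1)
      = (1/((n':ℝ)+1) - (p':ℝ)/(((n':ℝ)+1)*(n':ℝ))) * (1/((b:ℝ)+2)) := by
    intro b hb
    simp only [mem_range] at hb
    have hb1 : b + 1 ≤ n' := by omega
    have hS0 : (∑ p ∈ range (b+2), ((p'.choose p : ℝ) * (q'.choose (b+1-p) : ℝ)))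
        = (n'.choose (b+1) : ℝ) := by exact_mod_cast vand p' q' (b+1)
    have hS1 : (∑ p ∈ range (b+2), (p:ℝ) * ((p'.choose p : ℝ) * (q'.choose (b+1-p):ℝ)))
        = (p':ℝ) * (((n'-1).choose b : ℕ) : ℝ) := by exact_mod_cast vand1 p' q' b
    have split : ∑ p ∈ range ((b+1)+1), e p (b+1)
        = (∑ p ∈ range (b+2), ((p'.choose p : ℝ) * (q'.choose (b+1-p) : ℝ)))
            * (W (b+1) (n'-(b+1)) * (1/((b:ℝ)+2)))
          + (∑ p ∈ range (b+2), (p:ℝ) * ((p'.choose p : ℝ) * (q'.choose (b+1-p):ℝ)))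
            * (W (b+1) (n'-(b+1)) * (1/((b:ℝ)+2) - 1/((b:ℝ)+1))) := by
      rw [Finset.sum_mul, Finset.sum_mul, ← Finset.sum_add_distrib]
      refine Finset.sum_congr rfl fun p hp => ?_
      rw [he]
      have cb : ((b+1 : ℕ):ℝ) = (b:ℝ)+1 := by push_cast; ring
      simp only [cb]
      ring
    rw [split, hS0, hS1]
    have w0 : W (b+1) (n'-(b+1)) * ((n'.choose (b+1)) : ℝ) = 1/((n':ℝ)+1) := W_choose hb1
    have w1 : W (b+1) (n'-(b+1)) * (((n'-1).choose b : ℕ) : ℝ)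
        = ((b:ℝ)+1)/(((n':ℝ)+1)*(n':ℝ)) := by
      have := W_choose1 (n := n') (b := b+1) (by omega) hb1
      rw [Nat.add_sub_cancel] at this
      rw [this]
      push_cast
      ring
    have hbne : ((b:ℝ)+1) ≠ 0 := by positivity
    have hbne2 : ((b:ℝ)+2) ≠ 0 := by positivity
    calc ((n'.choose (b+1)) : ℝ) * (W (b+1) (n'-(b+1)) * (1/((b:ℝ)+2)))
          + ((p':ℝ) * (((n'-1).choose b : ℕ) : ℝ))
            * (W (b+1) (n'-(b+1)) * (1/((b:ℝ)+2) - 1/((b:ℝ)+1)))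
        = (W (b+1) (n'-(b+1)) * ((n'.choose (b+1)) : ℝ)) * (1/((b:ℝ)+2))
          + (p':ℝ) * (W (b+1) (n'-(b+1)) * (((n'-1).choose b : ℕ) : ℝ))
            * (1/((b:ℝ)+2) - 1/((b:ℝ)+1)) := by ring
      _ = (1/((n':ℝ)+1)) * (1/((b:ℝ)+2))
          + (p':ℝ) * (((b:ℝ)+1)/(((n':ℝ)+1)*(n':ℝ))) * (1/((b:ℝ)+2) - 1/((b:ℝ)+1)) := by
            rw [w0, w1]
      _ = (1/((n':ℝ)+1) - (p':ℝ)/(((n':ℝ)+1)*(n':ℝ))) * (1/((b:ℝ)+2)) := by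
            have hn1 : ((n':ℝ)+1) ≠ 0 := by positivity
            have hn0 : (n':ℝ) ≠ 0 := by
              have : 1 ≤ n' := h1
              simp only [ne_eq, Nat.cast_eq_zero]
              omega
            field_simp
            ring
  rw [Finset.sum_congr rfl Eb', b0, ← Finset.mul_sum]
  have Hsub : ∑ b ∈ range n', (1:ℝ)/((b:ℝ)+2) = H (n'+1) - 1 := by
    rw [H, Finset.sum_range_succ']
    have : ∀ j ∈ range n', (1:ℝ)/(((j+1:ℕ):ℝ)+1) = (1:ℝ)/((j:ℝ)+2) := by
      intro j _
      push_cast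
      ring
    rw [Finset.sum_congr rfl this]
    push_cast
    ring
  rw [Hsub]
  have hpq : (p':ℝ)+(q':ℝ) = (n':ℝ) := by rw [hn']; push_cast; ring
  rw [hpq]
  have hn1 : ((n':ℝ)+1) ≠ 0 := by positivity
  have hn0 : (n':ℝ) ≠ 0 := by
    simp only [ne_eq, Nat.cast_eq_zero]
    omega
  field_simp
  ring

/-- Closed form of the Shapley value for a correct-label bucket member (`M ≥ 2`):
`φ_i = H_M/M − (M⁺ − 1)(H_M − 1)/(M(M − 1))`. -/
theorem stmt5 {α : Type*} [DecidableEq α] (N B Bp : Finset α)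
    (hBpB : Bp ⊆ B) (hBN : B ⊆ N) (hM : 2 ≤ B.card)
    (i : α) (hi : i ∈ Bp) :
    shapley N B Bp i =
      H B.card / (B.card : ℝ) -
        ((Bp.card : ℝ) - 1) * (H B.card - 1) / ((B.card : ℝ) * ((B.card : ℝ) - 1)) := by
  classical
  have hiB : i ∈ B := hBpB hi
  have hiN : i ∈ N := hBN hiB
  set A1 : Finset α := Bp.erase i with hA1
  set A2 : Finset α := B \ Bp with hA2
  set R0 : Finset α := N \ B with hR0
  have hBpc : 1 ≤ Bp.card := Finset.card_pos.2 ⟨i, hi⟩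
  have hBpBc : Bp.card ≤ B.card := Finset.card_le_card hBpB
  have hA1c : A1.card = Bp.card - 1 := Finset.card_erase_of_mem hi
  have hA2c : A2.card = B.card - Bp.card := Finset.card_sdiff_of_subset hBpB
  have hR0c : R0.card = N.card - B.card := Finset.card_sdiff_of_subset hBN
  have hBNc : B.card ≤ N.card := Finset.card_le_card hBN
  have hBic : (B.erase i).card = B.card - 1 := Finset.card_erase_of_mem hiB
  have hNi : N.erase i = (B.erase i) ∪ R0 := by
    ext x
    simp only [mem_erase, mem_union, mem_sdiff, hR0]
    constructor
    · rintro ⟨hxi, hxN⟩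
      by_cases hxB : x ∈ B
      · exact Or.inl ⟨hxi, hxB⟩
      · exact Or.inr ⟨hxN, hxB⟩
    · rintro (⟨hxi, hxB⟩ | ⟨hxN, hxB⟩)
      · exact ⟨hxi, hBN hxB⟩
      · exact ⟨fun h => hxB (h ▸ hiB), hxN⟩
  have hdisj1 : Disjoint (B.erase i) R0 := by
    rw [Finset.disjoint_left]
    intro x hx hx2
    exact (Finset.mem_sdiff.1 hx2).2 (Finset.mem_of_mem_erase hx)
  have hBi : B.erase i = A1 ∪ A2 := by
    ext x
    simp only [mem_erase, mem_union, mem_sdiff, hA1, hA2]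
    constructor
    · rintro ⟨hxi, hxB⟩
      by_cases hxBp : x ∈ Bp
      · exact Or.inl ⟨hxi, hxBp⟩
      · exact Or.inr ⟨hxB, hxBp⟩
    · rintro (⟨hxi, hxBp⟩ | ⟨hxB, hxBp⟩)
      · exact ⟨hxi, hBpB hxBp⟩
      · exact ⟨fun h => hxBp (h ▸ hi), hxB⟩
  have hdisj2 : Disjoint A1 A2 := by
    rw [Finset.disjoint_left]
    intro x hx hx2
    exact (Finset.mem_sdiff.1 hx2).2 (Finset.mem_of_mem_erase hx)
  -- Step 1: expand over T, R
  rw [shapley, hNi, powerset_union_sum hdisj1]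
  -- termwise rewrite
  have hterm : ∀ T ∈ (B.erase i).powerset, ∀ R ∈ R0.powerset,
      (((T ∪ R).card.factorial * (N.card - (T ∪ R).card - 1).factorial : ℝ)
          / (N.card.factorial : ℝ))
        * (u B Bp (insert i (T ∪ R)) - u B Bp (T ∪ R))
      = W (T.card + R.card) (((B.erase i) \ T).card + (R0 \ R).card) *
          ((((T ∩ Bp).card : ℝ)+1)/((T.card:ℝ)+1) - ((T ∩ Bp).card:ℝ)/(T.card:ℝ)) := by
    intro T hT R hR
    rw [Finset.mem_powerset] at hT hR
    have hTB : T ⊆ B := hT.trans (Finset.erase_subset _ _)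
    have hiT : i ∉ T := fun h => (Finset.mem_erase.1 (hT h)).1 rfl
    have hRB : ∀ x ∈ R, x ∉ B := fun x hx => (Finset.mem_sdiff.1 (hR hx)).2
    have hdTR : Disjoint T R := by
      rw [Finset.disjoint_left]
      exact fun x hx hx2 => hRB x hx2 (hTB hx)
    have hUB : (T ∪ R) ∩ B = T := by
      ext x
      simp only [mem_inter, mem_union]
      constructor
      · rintro ⟨hx1 | hx1, hx2⟩
        · exact hx1
        · exact absurd hx2 (hRB x hx1)
      · exact fun hx => ⟨Or.inl hx, hTB hx⟩
    have hUBp : (T ∪ R) ∩ Bp = T ∩ Bp := by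
      ext x
      simp only [mem_inter, mem_union]
      constructor
      · rintro ⟨hx1 | hx1, hx2⟩
        · exact ⟨hx1, hx2⟩
        · exact absurd (hBpB hx2) (hRB x hx1)
      · rintro ⟨hx1, hx2⟩
        exact ⟨Or.inl hx1, hx2⟩
    have hiUB : (insert i (T ∪ R)) ∩ B = insert i T := by
      rw [Finset.insert_inter_of_mem hiB, hUB]
    have hiUBp : (insert i (T ∪ R)) ∩ Bp = insert i (T ∩ Bp) := by
      rw [Finset.insert_inter_of_mem hi, hUBp]
    have hiTBp : i ∉ T ∩ Bp := fun h => hiT (Finset.mem_inter.1 h).1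
    -- u values
    have hu1 : u B Bp (insert i (T ∪ R)) =
        (((T ∩ Bp).card : ℝ)+1)/((T.card:ℝ)+1) := by
      rw [u, hiUB, hiUBp, if_pos ⟨i, Finset.mem_insert_self _ _⟩,
        Finset.card_insert_of_notMem hiT, Finset.card_insert_of_notMem hiTBp]
      push_cast
      ring
    have hu2 : u B Bp (T ∪ R) = ((T ∩ Bp).card:ℝ)/(T.card:ℝ) := by
      rw [u, hUB, hUBp]
      by_cases hTe : T = ∅
      · subst hTe
        simp
      · rw [if_pos (Finset.nonempty_of_ne_empty hTe)]
    rw [hu1, hu2]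
    -- card / factorial bookkeeping
    have hUcard : (T ∪ R).card = T.card + R.card := Finset.card_union_of_disjoint hdTR
    have hc1 : ((B.erase i) \ T).card = (B.card - 1) - T.card := by
      rw [Finset.card_sdiff_of_subset hT, hBic]
    have hc2 : (R0 \ R).card = R0.card - R.card := Finset.card_sdiff_of_subset hR
    have hTle : T.card ≤ B.card - 1 := hBic ▸ Finset.card_le_card hT
    have hRle : R.card ≤ R0.card := Finset.card_le_card hR
    have hNcard : N.card = (B.card - 1) + R0.card + 1 := by
      have h1 : (N.erase i).card = N.card - 1 := Finset.card_erase_of_mem hiN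
      have h2 : (N.erase i).card = (B.erase i).card + R0.card := by
        rw [hNi, Finset.card_union_of_disjoint hdisj1]
      have h3 : 1 ≤ N.card := Finset.card_pos.2 ⟨i, hiN⟩
      omega
    have hsub : N.card - (T ∪ R).card - 1 = ((B.erase i) \ T).card + (R0 \ R).card := by
      rw [hUcard, hc1, hc2]; omega
    have htot : T.card + R.card + (((B.erase i) \ T).card + (R0 \ R).card) + 1 = N.card := by
      rw [hc1, hc2]; omega
    rw [hsub, hUcard, W, htot]
  rw [Finset.sum_congr rfl (fun T hT => Finset.sum_congr rfl (fun R hR => hterm T hT R hR))]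
  -- Step 2: marginalize out R
  have hmarg : ∀ T ∈ (B.erase i).powerset,
      ∑ R ∈ R0.powerset, W (T.card + R.card) (((B.erase i) \ T).card + (R0 \ R).card) *
          ((((T ∩ Bp).card : ℝ)+1)/((T.card:ℝ)+1) - ((T ∩ Bp).card:ℝ)/(T.card:ℝ))
      = W T.card (((B.erase i) \ T).card) *
          ((((T ∩ Bp).card : ℝ)+1)/((T.card:ℝ)+1) - ((T ∩ Bp).card:ℝ)/(T.card:ℝ)) := by
    intro T hT
    rw [← Finset.sum_mul, marginal T.card (((B.erase i) \ T).card) R0]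
  rw [Finset.sum_congr rfl hmarg]
  -- Step 3: split T into P ⊆ A1, Q ⊆ A2
  rw [hBi, powerset_union_sum hdisj2]
  set g : ℕ → ℕ → ℝ := fun p q =>
    W (p+q) ((A1.card - p)+(A2.card - q)) *
      (((p:ℝ)+1)/((p:ℝ)+(q:ℝ)+1) - (p:ℝ)/((p:ℝ)+(q:ℝ))) with hg
  have hterm2 : ∀ P ∈ A1.powerset, ∀ Q ∈ A2.powerset,
      W (P ∪ Q).card (((A1 ∪ A2) \ (P ∪ Q)).card) *
        (((((P ∪ Q) ∩ Bp).card : ℝ)+1)/(((P ∪ Q).card:ℝ)+1)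
          - (((P ∪ Q) ∩ Bp).card:ℝ)/((P ∪ Q).card:ℝ))
      = g P.card Q.card := by
    intro P hP Q hQ
    rw [Finset.mem_powerset] at hP hQ
    have hPBp : P ⊆ Bp := hP.trans (Finset.erase_subset _ _)
    have hQBp : ∀ x ∈ Q, x ∉ Bp := fun x hx => (Finset.mem_sdiff.1 (hQ hx)).2
    have hdPQ : Disjoint P Q := by
      rw [Finset.disjoint_left]
      exact fun x hx hx2 => hQBp x hx2 (hPBp hx)
    have hUcard : (P ∪ Q).card = P.card + Q.card := Finset.card_union_of_disjoint hdPQ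
    have hUBp : (P ∪ Q) ∩ Bp = P := by
      ext x
      simp only [mem_inter, mem_union]
      constructor
      · rintro ⟨hx1 | hx1, hx2⟩
        · exact hx1
        · exact absurd hx2 (hQBp x hx1)
      · exact fun hx => ⟨Or.inl hx, hPBp hx⟩
    have hsd : (A1 ∪ A2) \ (P ∪ Q) = (A1 \ P) ∪ (A2 \ Q) := by
      ext x
      simp only [mem_sdiff, mem_union, not_or]
      constructor
      · rintro ⟨hx1 | hx1, hx2, hx3⟩
        · exact Or.inl ⟨hx1, hx2⟩
        · exact Or.inr ⟨hx1, hx3⟩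
      · rintro (⟨hx1, hx2⟩ | ⟨hx1, hx2⟩)
        · refine ⟨Or.inl hx1, hx2, fun hxQ => ?_⟩
          exact Finset.disjoint_left.1 hdisj2 hx1 (hQ hxQ)
        · refine ⟨Or.inr hx1, fun hxP => ?_, hx2⟩
          exact Finset.disjoint_left.1 hdisj2 (hP hxP) hx1
    have hdsd : Disjoint (A1 \ P) (A2 \ Q) :=
      hdisj2.mono (Finset.sdiff_subset) (Finset.sdiff_subset)
    have hsdc : ((A1 ∪ A2) \ (P ∪ Q)).card = (A1.card - P.card) + (A2.card - Q.card) := by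
      rw [hsd, Finset.card_union_of_disjoint hdsd, Finset.card_sdiff_of_subset hP, Finset.card_sdiff_of_subset hQ]
    rw [hUcard, hUBp, hsdc, hg]
    have cpq : ((P.card + Q.card : ℕ):ℝ) = (P.card:ℝ)+(Q.card:ℝ) := by push_cast; ring
    simp only [cpq]
  rw [Finset.sum_congr rfl (fun P hP => Finset.sum_congr rfl (fun Q hQ => hterm2 P hP Q hQ))]
  -- Step 4: reduce to numeric sums
  have inner : ∀ P ∈ A1.powerset,
      ∑ Q ∈ A2.powerset, g P.card Q.card
        = ∑ q ∈ range (A2.card+1), (A2.card.choose q : ℝ) * g P.card q := by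
    intro P _
    rw [Finset.sum_powerset_apply_card (fun q => g P.card q)]
    simp [nsmul_eq_mul]
  rw [Finset.sum_congr rfl inner,
    Finset.sum_powerset_apply_card
      (fun p => ∑ q ∈ range (A2.card+1), (A2.card.choose q : ℝ) * g p q)]
  simp only [nsmul_eq_mul]
  -- Step 5: apply key
  have hsum1 : A1.card + A2.card + 1 = B.card := by omega
  have hkey := key_s5 A1.card A2.card (by omega)
  have hmatch : ∑ p ∈ range (A1.card+1), (A1.card.choose p : ℝ) *
        ∑ q ∈ range (A2.card+1), (A2.card.choose q : ℝ) * g p q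
      = (∑ p ∈ range (A1.card+1), ∑ q ∈ range (A2.card+1),
          (A1.card.choose p : ℝ) * (A2.card.choose q : ℝ) *
            W (p+q) ((A1.card-p)+(A2.card-q)) *
            (((p:ℝ)+1)/((p:ℝ)+(q:ℝ)+1) - (p:ℝ)/((p:ℝ)+(q:ℝ)))) := by
    refine Finset.sum_congr rfl fun p _ => ?_
    rw [Finset.mul_sum]
    refine Finset.sum_congr rfl fun q _ => ?_
    rw [hg]
    ring
  rw [hmatch, hkey]
  -- Step 6: final cast algebra
  have c1 : ((A1.card : ℕ):ℝ) = (Bp.card:ℝ) - 1 := by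
    rw [hA1c, Nat.cast_sub hBpc]
    push_cast
    ring
  have c2 : (A1.card:ℝ) + (A2.card:ℝ) + 1 = (B.card:ℝ) := by
    have := congrArg (Nat.cast (R := ℝ)) hsum1
    push_cast at this
    linarith
  have c3 : (A1.card:ℝ) + (A2.card:ℝ) = (B.card:ℝ) - 1 := by linarith
  rw [hsum1, c2, c3, c1]
end

section
/- Suppose M ≥ 2 and i ∈ B \ B⁺. Then the Shapley value of i under u admits the closed form φ_i = −M⁺(H_M − 1)/(M(M − 1)). -/
open Finset

lemma sumD {α : Type*} [DecidableEq α] (n : ℕ) (R : Finset α) :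
    ∀ s : ℕ, s + R.card + 1 ≤ n →
    ∑ K ∈ R.powerset, ((s + K.card).factorial * (n - (s + K.card) - 1).factorial : ℝ) / n.factorial
      = (s.factorial * (n - R.card - s - 1).factorial : ℝ) / (n - R.card).factorial := by
  induction R using Finset.induction with
  | empty => intro s hs; simp
  | @insert a R ha ih =>
    intro s hs
    rw [Finset.sum_powerset_insert ha]
    have hc : (insert a R).card = R.card + 1 := Finset.card_insert_of_notMem ha
    rw [hc] at hs ⊢
    have h2 : ∑ K ∈ R.powerset,
        ((s + (insert a K).card).factorial * (n - (s + (insert a K).card) - 1).factorial : ℝ) / n.factorial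
        = ∑ K ∈ R.powerset,
        (((s+1) + K.card).factorial * (n - ((s+1) + K.card) - 1).factorial : ℝ) / n.factorial := by
      refine Finset.sum_congr rfl fun K hK => ?_
      have haK : a ∉ K := fun h => ha (Finset.mem_powerset.1 hK h)
      rw [Finset.card_insert_of_notMem haK]
      ring_nf
    rw [h2, ih s (by omega), ih (s+1) (by omega)]
    obtain ⟨t, ht⟩ : ∃ t, n = s + R.card + 2 + t := ⟨n - (s + R.card + 2), by omega⟩
    subst ht
    have e1 : s + R.card + 2 + t - R.card - s - 1 = t + 1 := by omega
    have e2 : s + R.card + 2 + t - R.card - (s+1) - 1 = t := by omega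
    have e3 : s + R.card + 2 + t - R.card = s + t + 2 := by omega
    have e4 : s + R.card + 2 + t - (R.card + 1) - s - 1 = t := by omega
    have e5 : s + R.card + 2 + t - (R.card + 1) = s + t + 1 := by omega
    rw [e1, e2, e3, e4, e5]
    have f1 : (s + t + 2).factorial = (s + t + 2) * (s + t + 1).factorial := rfl
    have f2 : (t + 1).factorial = (t + 1) * t.factorial := rfl
    have f3 : (s + 1).factorial = (s + 1) * s.factorial := rfl
    rw [f1, f2, f3]
    have p1 : (0:ℝ) < (s + t + 1).factorial := by positivity
    have p0 : ((s:ℝ) + t + 2) ≠ 0 := by positivity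
    field_simp
    push_cast
    ring

lemma sum_powerset_union' {α : Type*} [DecidableEq α] {D E : Finset α} (h : Disjoint D E)
    (f : Finset α → ℝ) :
    ∑ S ∈ (D ∪ E).powerset, f S = ∑ T ∈ D.powerset, ∑ K ∈ E.powerset, f (T ∪ K) := by
  induction D using Finset.induction generalizing f with
  | empty => simp
  | @insert a D ha ih =>
    have haE : a ∉ E := fun hx => (Finset.disjoint_left.1 h (mem_insert_self a D)) hx
    have hDE : Disjoint D E := h.mono_left (Finset.subset_insert a D)
    have haDE : a ∉ D ∪ E := by simp [ha, haE]
    rw [Finset.insert_union, Finset.sum_powerset_insert haDE, ih hDE f,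
      ih hDE (fun S => f (insert a S)), Finset.sum_powerset_insert ha]
    congr 1
    refine Finset.sum_congr rfl fun T _ => Finset.sum_congr rfl fun K _ => ?_
    rw [Finset.insert_union]

/-- Closed form of the Shapley value for an incorrect-label bucket member (`M ≥ 2`):
`φ_i = −M⁺(H_M − 1)/(M(M − 1))`. -/
theorem stmt6 {α : Type*} [DecidableEq α] (N B Bp : Finset α)
    (hBpB : Bp ⊆ B) (hBN : B ⊆ N) (hM : 2 ≤ B.card)
    (i : α) (hiB : i ∈ B) (hiBp : i ∉ Bp) :
    shapley N B Bp i =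
      -((Bp.card : ℝ) * (H B.card - 1)) / ((B.card : ℝ) * ((B.card : ℝ) - 1)) := by
  classical
  obtain ⟨m, hm⟩ : ∃ m, B.card = m + 2 := ⟨B.card - 2, by omega⟩
  have hMn : B.card ≤ N.card := Finset.card_le_card hBN
  set n := N.card with hn
  -- weight function
  set w : ℕ → ℝ := fun s => ((s.factorial * (n - s - 1).factorial : ℕ) : ℝ) / (n.factorial : ℝ)
    with hw
  -- Step A: the marginal contribution
  have stepA : ∀ S ∈ (N.erase i).powerset,
      u B Bp (insert i S) - u B Bp S
        = -(((S ∩ Bp).card : ℝ) / (((S ∩ B).card : ℝ) * (((S ∩ B).card : ℝ) + 1))) := by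
    intro S hS
    have hiS : i ∉ S := fun h => (Finset.notMem_erase i N) (Finset.mem_powerset.1 hS h)
    have h1 : insert i S ∩ B = insert i (S ∩ B) := Finset.insert_inter_of_mem hiB
    have h2 : insert i S ∩ Bp = S ∩ Bp := Finset.insert_inter_of_notMem hiBp
    have hiSB : i ∉ S ∩ B := fun h => hiS (Finset.mem_inter.1 h).1
    have hcard : ((insert i S ∩ B).card : ℝ) = ((S ∩ B).card : ℝ) + 1 := by
      rw [h1, Finset.card_insert_of_notMem hiSB]; push_cast; ring
    by_cases hne : (S ∩ B).Nonempty
    · have hb : (1:ℝ) ≤ ((S ∩ B).card : ℝ) := by exact_mod_cast Finset.card_pos.2 hne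
      have hb0 : ((S ∩ B).card : ℝ) ≠ 0 := by linarith
      have hb1 : ((S ∩ B).card : ℝ) + 1 ≠ 0 := by positivity
      rw [u, u, if_pos, if_pos hne, h2, hcard]
      · field_simp; ring
      · rw [h1]; exact Finset.insert_nonempty _ _
    · have hSB : S ∩ B = ∅ := Finset.not_nonempty_iff_eq_empty.1 hne
      have hsub : S ∩ Bp ⊆ S ∩ B := Finset.inter_subset_inter Finset.Subset.rfl hBpB
      have hSBp : S ∩ Bp = ∅ := Finset.subset_empty.1 (hSB ▸ hsub)
      rw [u, u, if_neg hne, if_pos, h2, hSBp]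
      · simp
      · rw [h1]; exact Finset.insert_nonempty _ _
  -- rewrite shapley with stepA and expand the numerator as a sum over j ∈ Bp
  have step1 : shapley N B Bp i
      = ∑ j ∈ Bp, ∑ S ∈ (N.erase i).powerset,
          (if j ∈ S then
            -(w S.card / (((S ∩ B).card : ℝ) * (((S ∩ B).card : ℝ) + 1))) else 0) := by
    rw [shapley, ← hn, Finset.sum_comm]
    refine Finset.sum_congr rfl fun S hS => ?_
    rw [stepA S hS]
    have hnum : ((S ∩ Bp).card : ℝ) = ∑ j ∈ Bp, (if j ∈ S then (1:ℝ) else 0) := by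
      rw [Finset.inter_comm, ← Finset.filter_mem_eq_inter, Finset.card_filter]
      push_cast [Finset.sum_ite]
      simp
    rw [hnum, Finset.sum_div, mul_neg, Finset.mul_sum, ← Finset.sum_neg_distrib]
    refine Finset.sum_congr rfl fun j _ => ?_
    simp only [hw]
    split_ifs with hc
    · push_cast; ring
    · simp
  -- the inner sum for a fixed j ∈ Bp
  have step2 : ∀ j ∈ Bp,
      ∑ S ∈ (N.erase i).powerset,
          (if j ∈ S then
            -(w S.card / (((S ∩ B).card : ℝ) * (((S ∩ B).card : ℝ) + 1))) else 0)
        = -((H B.card - 1) / ((B.card : ℝ) * ((B.card : ℝ) - 1))) := by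
    intro j hj
    have hjB : j ∈ B := hBpB hj
    have hji : j ≠ i := fun h => hiBp (h ▸ hj)
    have hjP : j ∈ N.erase i := Finset.mem_erase.2 ⟨hji, hBN hjB⟩
    rw [← Finset.insert_erase hjP, Finset.sum_powerset_insert (Finset.notMem_erase j _)]
    have hz : ∑ S ∈ ((N.erase i).erase j).powerset,
        (if j ∈ S then
          -(w S.card / (((S ∩ B).card : ℝ) * (((S ∩ B).card : ℝ) + 1))) else 0) = 0 := by
      refine Finset.sum_eq_zero fun S hS => ?_
      have : j ∉ S := fun h => (Finset.notMem_erase j (N.erase i)) (Finset.mem_powerset.1 hS h)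
      rw [if_neg this]
    rw [hz, zero_add]
    -- decompose the ground set
    set B' := (B.erase i).erase j with hB'
    have hB'card : B'.card = m := by
      rw [hB', Finset.card_erase_of_mem (Finset.mem_erase.2 ⟨hji, hjB⟩),
        Finset.card_erase_of_mem hiB, hm]
      omega
    have hsplit : (N.erase i).erase j = B' ∪ (N \ B) := by
      ext x
      simp only [hB', Finset.mem_erase, Finset.mem_union, Finset.mem_sdiff]
      by_cases hxB : x ∈ B
      · constructor
        · rintro ⟨hxj, hxi, _⟩; exact Or.inl ⟨hxj, hxi, hxB⟩
        · rintro (⟨hxj, hxi, _⟩ | ⟨_, h⟩)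
          · exact ⟨hxj, hxi, hBN hxB⟩
          · exact absurd hxB h
      · constructor
        · rintro ⟨hxj, hxi, hxN⟩; exact Or.inr ⟨hxN, hxB⟩
        · rintro (⟨_, _, h⟩ | ⟨hxN, _⟩)
          · exact absurd h hxB
          · refine ⟨fun h => hxB (h ▸ hjB), fun h => hxB (h ▸ hiB), hxN⟩
    have hdisj : Disjoint B' (N \ B) := by
      refine Finset.disjoint_left.2 fun x hx hx' => ?_
      have : x ∈ B := Finset.mem_of_mem_erase (Finset.mem_of_mem_erase hx)
      exact (Finset.mem_sdiff.1 hx').2 this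
    rw [hsplit, sum_powerset_union' hdisj]
    -- evaluate each (T, K) term
    have hRcard : (N \ B).card = n - B.card := Finset.card_sdiff_of_subset hBN
    have hterm : ∀ T ∈ B'.powerset,
        (∑ K ∈ (N \ B).powerset,
          (if j ∈ insert j (T ∪ K) then
            -(w (insert j (T ∪ K)).card /
              (((insert j (T ∪ K) ∩ B).card : ℝ) * (((insert j (T ∪ K) ∩ B).card : ℝ) + 1)))
          else 0))
        = -((((T.card+1).factorial * (B.card - T.card - 2).factorial : ℕ) : ℝ) / (B.card.factorial : ℝ)
            / (((T.card : ℝ) + 1) * ((T.card : ℝ) + 2))) := by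
      intro T hT
      have hTB' : T ⊆ B' := Finset.mem_powerset.1 hT
      have hTm : T.card ≤ m := hB'card ▸ Finset.card_le_card hTB'
      have key : ∀ K ∈ (N \ B).powerset,
          (if j ∈ insert j (T ∪ K) then
            -(w (insert j (T ∪ K)).card /
              (((insert j (T ∪ K) ∩ B).card : ℝ) * (((insert j (T ∪ K) ∩ B).card : ℝ) + 1)))
          else 0)
          = -(w ((T.card + 1) + K.card) / (((T.card : ℝ) + 1) * ((T.card : ℝ) + 2))) := by
        intro K hK
        have hKR : K ⊆ N \ B := Finset.mem_powerset.1 hK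
        have hKB : ∀ x ∈ K, x ∉ B := fun x hx => (Finset.mem_sdiff.1 (hKR hx)).2
        have hjTK : j ∉ T ∪ K := by
          intro h
          rcases Finset.mem_union.1 h with h | h
          · exact (Finset.notMem_erase j (B.erase i)) (hTB' h)
          · exact hKB j h hjB
        have hdTK : Disjoint T K := by
          refine Finset.disjoint_left.2 fun x hx hx' => ?_
          exact hKB x hx' (Finset.mem_of_mem_erase (Finset.mem_of_mem_erase (hTB' hx)))
        have hcard1 : (insert j (T ∪ K)).card = (T.card + 1) + K.card := by
          rw [Finset.card_insert_of_notMem hjTK, Finset.card_union_of_disjoint hdTK]; ring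
        have hTKB : insert j (T ∪ K) ∩ B = insert j T := by
          rw [Finset.insert_inter_of_mem hjB, Finset.union_inter_distrib_right]
          have h1 : T ∩ B = T := Finset.inter_eq_left.2 fun x hx =>
            Finset.mem_of_mem_erase (Finset.mem_of_mem_erase (hTB' hx))
          have h2 : K ∩ B = ∅ := by
            refine Finset.eq_empty_of_forall_notMem fun x hx => ?_
            exact hKB x (Finset.mem_inter.1 hx).1 (Finset.mem_inter.1 hx).2
          rw [h1, h2, Finset.union_empty]
        have hjT : j ∉ T := fun h => (Finset.notMem_erase j (B.erase i)) (hTB' h)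
        have hcard2 : ((insert j (T ∪ K) ∩ B).card : ℝ) = (T.card : ℝ) + 1 := by
          rw [hTKB, Finset.card_insert_of_notMem hjT]; push_cast; ring
        rw [if_pos (Finset.mem_insert_self j _), hcard1, hcard2]
        ring_nf
      rw [Finset.sum_congr rfl key]
      have hD := sumD n (N \ B) (T.card + 1) (by rw [hRcard]; omega)
      simp only [hw] at hD ⊢
      rw [Finset.sum_neg_distrib, ← Finset.sum_div]
      have e1 : n - (n - B.card) - (T.card + 1) - 1 = B.card - T.card - 2 := by omega
      have e2 : n - (n - B.card) = B.card := by omega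
      rw [hRcard, e1, e2] at hD
      push_cast at hD ⊢
      rw [hD]
    rw [Finset.sum_congr rfl hterm]
    -- now a sum over T ⊆ B' of a function of T.card
    rw [Finset.sum_powerset_apply_card
      (fun t => -((((t+1).factorial * (B.card - t - 2).factorial : ℕ) : ℝ) / (B.card.factorial : ℝ)
            / (((t : ℝ) + 1) * ((t : ℝ) + 2)))), hB'card]
    have hfin : ∀ t ∈ Finset.range (m + 1),
        (m.choose t) • -((((t+1).factorial * (B.card - t - 2).factorial : ℕ) : ℝ) / (B.card.factorial : ℝ)
            / (((t : ℝ) + 1) * ((t : ℝ) + 2)))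
        = -((1:ℝ) / (((m:ℝ)+2) * ((m:ℝ)+1) * ((t:ℝ)+2))) := by
      intro t ht
      have htm : t ≤ m := by simpa [Nat.lt_succ_iff] using Finset.mem_range.1 ht
      have hch : (m.choose t) * t.factorial * (m - t).factorial = m.factorial :=
        Nat.choose_mul_factorial_mul_factorial htm
      have hBt : B.card - t - 2 = m - t := by omega
      rw [hBt, nsmul_eq_mul, hm]
      have hfac : ((m+2).factorial : ℝ) = ((m:ℝ)+2) * ((m:ℝ)+1) * (m.factorial : ℝ) := by
        rw [show m + 2 = (m+1)+1 from rfl, Nat.factorial_succ, Nat.factorial_succ]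
        push_cast; ring
      have hfac2 : ((t+1).factorial : ℝ) = ((t:ℝ)+1) * (t.factorial : ℝ) := by
        rw [Nat.factorial_succ]; push_cast; ring
      have hchR : ((m.choose t : ℕ) : ℝ) * (t.factorial : ℝ) * ((m-t).factorial : ℝ)
          = (m.factorial : ℝ) := by exact_mod_cast congrArg (Nat.cast : ℕ → ℝ) hch
      have hmf : (0:ℝ) < m.factorial := by positivity
      have htf : (0:ℝ) < t.factorial := by positivity
      have hmtf : (0:ℝ) < (m-t).factorial := by positivity
      have ht1 : ((t:ℝ)+1) ≠ 0 := by positivity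
      have ht2 : ((t:ℝ)+2) ≠ 0 := by positivity
      have hm1 : ((m:ℝ)+1) ≠ 0 := by positivity
      have hm2 : ((m:ℝ)+2) ≠ 0 := by positivity
      have hC : ((m.choose t : ℕ) : ℝ) = (m.factorial : ℝ) / ((t.factorial : ℝ) * ((m-t).factorial : ℝ)) := by
        field_simp
        linear_combination hchR
      push_cast
      rw [hfac, hfac2, hC]
      field_simp
    rw [Finset.sum_congr rfl hfin]
    have hH : H B.card - 1 = ∑ t ∈ Finset.range (m + 1), (1:ℝ) / ((t:ℝ) + 2) := by
      have h0 : H (m+2) = (∑ t ∈ Finset.range (m+1), (1:ℝ)/((t:ℝ)+2)) + 1 := by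
        rw [H, Finset.sum_range_succ']
        norm_num
        exact Finset.sum_congr rfl fun t _ => by push_cast; ring
      rw [hm, h0]; ring
    rw [Finset.sum_neg_distrib, hH]
    have hrw : ∀ t ∈ Finset.range (m+1), (1:ℝ)/(((m:ℝ)+2)*((m:ℝ)+1)*((t:ℝ)+2))
        = ((1:ℝ)/((t:ℝ)+2))/((((m:ℝ)+2))*(((m:ℝ)+2)-1)) := by
      intro t _
      rw [div_div]
      congr 1
      ring
    rw [Finset.sum_congr rfl hrw, ← Finset.sum_div, hm]
    push_cast
    ring
  rw [step1, Finset.sum_congr rfl step2, Finset.sum_const, nsmul_eq_mul]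
  rw [neg_div]
  push_cast
  ring
end
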